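/- Let n, m ∈ ℕ, B ∈ ℝ^{n×m}, D ∈ ℝ^{n×n}, and scalars ρ, α, γ, μ, β, π, κ all positive; set Z_d := diag(μI_n, βI_n, πI_n, κI_n) ∈ ℝ^{4n×4n}. Let X ∈ ℝ^{2n×2n} be symmetric positive definite and Y ∈ ℝ^{m×2n}, and set P := X^{-1} and K := Y X^{-1}. Then the following are equivalent: (i) the symmetric block matrix with upper-left block A₀X + XA₀ᵀ + B₀Y + YᵀB₀ᵀ + ρX + μE₀E₀ᵀ + βF₀F₀ᵀ + (π + κ)G₀ᵀG₀, lower-left block the 4n×2n stacked matrix [BY; γ^{-1}G₀X; α^{-1}DG₀X; 0], upper-right its transpose, and lower-right block −Z_d, is negative definite; (ii) A_Kᵀ P + P A_K + μ P E₀ E₀ᵀ P + μ^{-1} Kᵀ Bᵀ B K + β P F₀ F₀ᵀ P + β^{-1} γ^{-2} G₀ᵀ G₀ + (π + κ) P G₀ᵀ G₀ P + π^{-1} α^{-2} G₀ᵀ Dᵀ D G₀ + ρ P is negative definite. -/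

import Mathlib

open Matrix

section Helpers

variable {p q : Type*} [Fintype p] [DecidableEq p] [Fintype q] [DecidableEq q]

lemma posDef_conj {M : Matrix p p ℝ} (hM : M.PosDef) (N : Matrix p p ℝ) (hN : IsUnit N.det) :
    (Nᵀ * M * N).PosDef := by
  refine Matrix.PosDef.of_dotProduct_mulVec_pos ?_ fun x hx => ?_
  · have h := hM.1
    simpa [Matrix.mul_assoc] using (isHermitian_conjTranspose_mul_mul N h :
      (Nᴴ * M * N).IsHermitian)
  · have hNx : N *ᵥ x ≠ 0 := by
      intro h
      apply hx
      have := congrArg (fun v => N⁻¹ *ᵥ v) h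
      simpa [Matrix.mulVec_mulVec, Matrix.nonsing_inv_mul _ hN] using this
    have := hM.dotProduct_mulVec_pos hNx
    rw [dotProduct_mulVec] at this ⊢
    rw [show star x = x from rfl, show star (N *ᵥ x) = N *ᵥ x from rfl] at *
    rw [show (N *ᵥ x) = x ᵥ* Nᵀ from (Matrix.vecMul_transpose _ _).symm,
      Matrix.vecMul_vecMul, Matrix.vecMul_transpose, dotProduct_mulVec,
      Matrix.vecMul_vecMul, Matrix.mul_assoc] at this
    rwa [Matrix.mul_assoc]

lemma posDef_conj_iff {M : Matrix p p ℝ} (N : Matrix p p ℝ) (hN : IsUnit N.det) :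
    (Nᵀ * M * N).PosDef ↔ M.PosDef := by
  constructor
  · intro h
    have := posDef_conj h N⁻¹ ((Matrix.isUnit_nonsing_inv_det_iff).mpr hN)
    rw [Matrix.transpose_nonsing_inv] at this
    have e : Nᵀ⁻¹ * (Nᵀ * M * N) * N⁻¹ = M := by
      rw [Matrix.mul_assoc, Matrix.mul_nonsing_inv_cancel_right _ _ hN,
        Matrix.nonsing_inv_mul_cancel_left _ _ (by simpa using hN)]
    rwa [e] at this
  · intro h; exact posDef_conj h N hN

omit [DecidableEq p] in
lemma posDef_fromBlocks₂₂' {A : Matrix p p ℝ} (Bm : Matrix p q ℝ) {Dm : Matrix q q ℝ}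
    (hD : Dm.PosDef) :
    (fromBlocks A Bm Bmᵀ Dm).PosDef ↔ (A - Bm * Dm⁻¹ * Bmᵀ).PosDef := by
  haveI : Invertible Dm := hD.isUnit.invertible
  rw [show Bmᵀ = Bmᴴ from rfl]
  have herm : (fromBlocks A Bm Bmᴴ Dm).IsHermitian ↔ (A - Bm * Dm⁻¹ * Bmᴴ).IsHermitian :=
    IsHermitian.fromBlocks₂₂ A Bm hD.1
  constructor
  · intro h
    refine Matrix.PosDef.of_dotProduct_mulVec_pos (herm.mp h.1) fun x hx => ?_
    have hxy : (x ⊕ᵥ (-((Dm⁻¹ * Bmᴴ) *ᵥ x))) ≠ 0 := by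
      intro h0
      exact hx (funext fun i => congrFun h0 (Sum.inl i))
    have := h.dotProduct_mulVec_pos hxy
    rw [dotProduct_mulVec, schur_complement_eq₂₂ A Bm x _ hD.1] at this
    simpa [dotProduct_mulVec] using this
  · intro h
    refine Matrix.PosDef.of_dotProduct_mulVec_pos (herm.mpr h.1) fun z hz => ?_
    have hzz : z = (z ∘ Sum.inl) ⊕ᵥ (z ∘ Sum.inr) := (Sum.elim_comp_inl_inr z).symm
    rw [dotProduct_mulVec, hzz, schur_complement_eq₂₂ A Bm _ _ hD.1]
    by_cases hx : z ∘ Sum.inl = 0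
    · have hy : (Dm⁻¹ * Bmᴴ) *ᵥ (z ∘ Sum.inl) + z ∘ Sum.inr ≠ 0 := by
        simp only [hx, Matrix.mulVec_zero, zero_add]
        intro h0
        apply hz
        rw [hzz, hx, h0]
        ext (i | i) <;> simp
      have h1 := hD.dotProduct_mulVec_pos hy
      rw [dotProduct_mulVec] at h1
      have h2 : star (z ∘ Sum.inl) ᵥ* (A - Bm * Dm⁻¹ * Bmᴴ) ⬝ᵥ (z ∘ Sum.inl) = 0 := by
        simp [hx]
      linarith
    · have h1 := h.dotProduct_mulVec_pos hx
      rw [dotProduct_mulVec] at h1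
      have h2 := (posSemidef_iff_dotProduct_mulVec.mp hD.posSemidef).2 ((Dm⁻¹ * Bmᴴ) *ᵥ (z ∘ Sum.inl) + z ∘ Sum.inr)
      rw [dotProduct_mulVec] at h2
      linarith

lemma posDef_smul_one {c : ℝ} (hc : 0 < c) : ((c • 1) : Matrix p p ℝ).PosDef := by
  rw [smul_one_eq_diagonal]
  exact posDef_diagonal_iff.mpr fun _ => hc

lemma posDef_fromBlocks_diag {A : Matrix p p ℝ} {D : Matrix q q ℝ}
    (hA : A.PosDef) (hD : D.PosDef) : (fromBlocks A 0 0 D).PosDef := by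
  rw [show (0 : Matrix q p ℝ) = (0 : Matrix p q ℝ)ᵀ from (transpose_zero).symm]
  exact (posDef_fromBlocks₂₂' 0 hD).mpr (by simpa using hA)

end Helpers

noncomputable section

/-- The block matrix `G₀ = [I_n 0] ∈ ℝ^{n×2n}`. -/
def G0 (n : ℕ) : Matrix (Fin n) (Fin n ⊕ Fin n) ℝ := fromCols 1 0

/-- The block matrix `F₀ = [0; I_n] ∈ ℝ^{2n×n}`. -/
def F0 (n : ℕ) : Matrix (Fin n ⊕ Fin n) (Fin n) ℝ := fromRows 0 1

/-- The block matrix `E₀ = [(1/2)I_n; 0] ∈ ℝ^{2n×n}`. -/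
def E0 (n : ℕ) : Matrix (Fin n ⊕ Fin n) (Fin n) ℝ := fromRows ((2 : ℝ)⁻¹ • 1) 0

/-- The block matrix `A₀ = [[0,0],[I_n,0]] ∈ ℝ^{2n×2n}`. -/
def A0 (n : ℕ) : Matrix (Fin n ⊕ Fin n) (Fin n ⊕ Fin n) ℝ := fromBlocks 0 0 1 0

/-- The one-to-one change of variables (64) of the paper: LMI (65) is equivalent to
inequality (43) via congruence with `diag(P, I)` and a Schur complement with respect to
the `−Z_d` block. -/
theorem stmt13 {n m : ℕ} (B : Matrix (Fin n) (Fin m) ℝ) (D : Matrix (Fin n) (Fin n) ℝ)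
    (ρ α γ μ β π κ : ℝ) (hρ : 0 < ρ) (hα : 0 < α) (hγ : 0 < γ) (hμ : 0 < μ)
    (hβ : 0 < β) (hπ : 0 < π) (hκ : 0 < κ)
    (X : Matrix (Fin n ⊕ Fin n) (Fin n ⊕ Fin n) ℝ) (hX : X.PosDef)
    (Y : Matrix (Fin m) (Fin n ⊕ Fin n) ℝ) :
    (-(fromBlocks
        (A0 n * X + X * (A0 n)ᵀ + fromRows B 0 * Y + Yᵀ * (fromRows B 0)ᵀ + ρ • X
          + μ • (E0 n * (E0 n)ᵀ) + β • (F0 n * (F0 n)ᵀ) + (π + κ) • ((G0 n)ᵀ * G0 n))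
        (fromRows (fromRows (B * Y) (γ⁻¹ • (G0 n * X)))
          (fromRows (α⁻¹ • (D * G0 n * X)) (0 : Matrix (Fin n) (Fin n ⊕ Fin n) ℝ)))ᵀ
        (fromRows (fromRows (B * Y) (γ⁻¹ • (G0 n * X)))
          (fromRows (α⁻¹ • (D * G0 n * X)) (0 : Matrix (Fin n) (Fin n ⊕ Fin n) ℝ)))
        (-(fromBlocks (fromBlocks (μ • 1) 0 0 (β • 1)) 0 0
            (fromBlocks (π • 1) 0 0 (κ • 1)))))).PosDef
    ↔
    (-((A0 n + fromRows B 0 * (Y * X⁻¹))ᵀ * X⁻¹ + X⁻¹ * (A0 n + fromRows B 0 * (Y * X⁻¹))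
        + μ • (X⁻¹ * E0 n * (E0 n)ᵀ * X⁻¹)
        + μ⁻¹ • ((Y * X⁻¹)ᵀ * Bᵀ * B * (Y * X⁻¹))
        + β • (X⁻¹ * F0 n * (F0 n)ᵀ * X⁻¹)
        + (β⁻¹ * (γ ^ 2)⁻¹) • ((G0 n)ᵀ * G0 n)
        + (π + κ) • (X⁻¹ * (G0 n)ᵀ * G0 n * X⁻¹)
        + (π⁻¹ * (α ^ 2)⁻¹) • ((G0 n)ᵀ * Dᵀ * D * G0 n)
        + ρ • X⁻¹)).PosDef := by
  have hd : IsUnit X.det := isUnit_iff_ne_zero.mpr (ne_of_gt hX.det_pos)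
  have hdi : IsUnit (X⁻¹).det := Matrix.isUnit_nonsing_inv_det _ hd
  have hXt : Xᵀ = X := hX.1
  have hXit : (X⁻¹)ᵀ = X⁻¹ := by rw [Matrix.transpose_nonsing_inv, hXt]
  set Zd : Matrix ((Fin n ⊕ Fin n) ⊕ (Fin n ⊕ Fin n)) ((Fin n ⊕ Fin n) ⊕ (Fin n ⊕ Fin n)) ℝ :=
    fromBlocks (fromBlocks (μ • 1) 0 0 (β • 1)) 0 0 (fromBlocks (π • 1) 0 0 (κ • 1)) with hZd
  have hZ : Zd.PosDef :=
    posDef_fromBlocks_diag (posDef_fromBlocks_diag (posDef_smul_one hμ) (posDef_smul_one hβ))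
      (posDef_fromBlocks_diag (posDef_smul_one hπ) (posDef_smul_one hκ))
  have hZinv : Zd⁻¹ =
      fromBlocks (fromBlocks (μ⁻¹ • 1) 0 0 (β⁻¹ • 1)) 0 0
        (fromBlocks (π⁻¹ • 1) 0 0 (κ⁻¹ • 1)) := by
    apply Matrix.inv_eq_right_inv
    simp [hZd, fromBlocks_multiply, smul_smul, mul_inv_cancel₀ hμ.ne', mul_inv_cancel₀ hβ.ne',
      mul_inv_cancel₀ hπ.ne', mul_inv_cancel₀ hκ.ne', inv_mul_cancel₀ hμ.ne', inv_mul_cancel₀ hβ.ne',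
      inv_mul_cancel₀ hπ.ne', inv_mul_cancel₀ hκ.ne', one_smul]
  set C := fromRows (fromRows (B * Y) (γ⁻¹ • (G0 n * X)))
      (fromRows (α⁻¹ • (D * G0 n * X)) (0 : Matrix (Fin n) (Fin n ⊕ Fin n) ℝ)) with hC
  set W := A0 n * X + X * (A0 n)ᵀ + fromRows B 0 * Y + Yᵀ * (fromRows B 0)ᵀ + ρ • X
      + μ • (E0 n * (E0 n)ᵀ) + β • (F0 n * (F0 n)ᵀ) + (π + κ) • ((G0 n)ᵀ * G0 n) with hW
  have h1 : -(fromBlocks W Cᵀ C (-Zd)) = fromBlocks (-W) (-Cᵀ) ((-Cᵀ)ᵀ) Zd := by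
    rw [fromBlocks_neg, transpose_neg, transpose_transpose, neg_neg]
  rw [h1, posDef_fromBlocks₂₂' (-Cᵀ) hZ]
  rw [← posDef_conj_iff (M := -W - -Cᵀ * Zd⁻¹ * (-Cᵀ)ᵀ) X⁻¹ hdi]
  have hT : Cᵀ * Zd⁻¹ * C =
      μ⁻¹ • (Yᵀ * (Bᵀ * (B * Y))) + (β⁻¹ * (γ⁻¹ * γ⁻¹)) • (X * ((G0 n)ᵀ * (G0 n * X)))
        + (π⁻¹ * (α⁻¹ * α⁻¹)) • (X * ((G0 n)ᵀ * (Dᵀ * (D * (G0 n * X))))) := by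
    rw [hC, hZinv]
    simp only [transpose_fromRows, transpose_smul, transpose_mul, transpose_zero, hXt,
      fromCols_mul_fromBlocks, fromCols_mul_fromRows, fromBlocks_mul_fromRows,
      Matrix.smul_mul, Matrix.mul_smul, smul_smul, Matrix.mul_assoc, Matrix.one_mul,
      Matrix.mul_one, Matrix.zero_mul, Matrix.mul_zero, smul_zero, zero_smul, add_zero,
      zero_add]
    module
  have key : (X⁻¹)ᵀ * (-W - -Cᵀ * Zd⁻¹ * (-Cᵀ)ᵀ) * X⁻¹ =
      -((A0 n + fromRows B 0 * (Y * X⁻¹))ᵀ * X⁻¹ + X⁻¹ * (A0 n + fromRows B 0 * (Y * X⁻¹))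
        + μ • (X⁻¹ * E0 n * (E0 n)ᵀ * X⁻¹)
        + μ⁻¹ • ((Y * X⁻¹)ᵀ * Bᵀ * B * (Y * X⁻¹))
        + β • (X⁻¹ * F0 n * (F0 n)ᵀ * X⁻¹)
        + (β⁻¹ * (γ ^ 2)⁻¹) • ((G0 n)ᵀ * G0 n)
        + (π + κ) • (X⁻¹ * (G0 n)ᵀ * G0 n * X⁻¹)
        + (π⁻¹ * (α ^ 2)⁻¹) • ((G0 n)ᵀ * Dᵀ * D * G0 n)
        + ρ • X⁻¹) := by
    have e0 : -W - -Cᵀ * Zd⁻¹ * (-Cᵀ)ᵀ = -(W + Cᵀ * Zd⁻¹ * C) := by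
      simp only [transpose_neg, transpose_transpose, Matrix.neg_mul, Matrix.mul_neg, neg_neg,
        sub_eq_add_neg, neg_add_rev]
      abel
    rw [e0, hT, hXit, hW]
    simp only [transpose_add, transpose_mul, transpose_smul, transpose_transpose, hXt, hXit,
      Matrix.mul_add, Matrix.add_mul, Matrix.neg_mul, Matrix.mul_neg,
      Matrix.smul_mul, Matrix.mul_smul, smul_smul, Matrix.mul_assoc,
      Matrix.mul_nonsing_inv, Matrix.nonsing_inv_mul,
      Matrix.nonsing_inv_mul_cancel_left, Matrix.mul_nonsing_inv_cancel_left,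
      Matrix.nonsing_inv_mul_cancel_right, Matrix.mul_nonsing_inv_cancel_right, hd,
      Matrix.mul_one, Matrix.one_mul, pow_two, mul_inv, neg_add_rev]
    module
  rw [key]
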